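/- In K_{2,n}, the planar variables X'_{i,j} = Σ_{i+1 ≤ a < b ≤ j} s_{ab}, indexed by pairs {i,j} that are not cyclically adjacent (i.e., j ≠ i±1 mod n), form a basis of the dual space of K_{2,n}; in particular there are n(n-3)/2 of them and K_{2,n} has dimension n(n-3)/2. -/

import Mathlib

/-- The kinematic space `K_{2,n}`: symmetric `n × n` real arrays with zero diagonal
satisfying momentum conservation `Σ_b s_{ab} = 0` for every `a`. -/
def K2 (n : ℕ) : Submodule ℝ (Fin n → Fin n → ℝ) where
  carrier := {s | (∀ a b, s a b = s b a) ∧ (∀ a, s a a = 0) ∧ ∀ a, ∑ b : Fin n, s a b = 0}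
  add_mem' := by
    rintro x y ⟨hx1, hx2, hx3⟩ ⟨hy1, hy2, hy3⟩
    refine ⟨fun a b => by simp [hx1 a b, hy1 a b], fun a => by simp [hx2 a, hy2 a], fun a => ?_⟩
    simp only [Pi.add_apply]
    rw [Finset.sum_add_distrib, hx3 a, hy3 a, add_zero]
  zero_mem' := ⟨fun a b => rfl, fun a => rfl, fun a => by simp⟩
  smul_mem' := by
    rintro c x ⟨h1, h2, h3⟩
    refine ⟨fun a b => by simp [h1 a b], fun a => by simp [h2 a], fun a => ?_⟩
    simp only [Pi.smul_apply, smul_eq_mul]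
    rw [← Finset.mul_sum, h3 a, mul_zero]

/-- The planar variable `X'_{i,j} = Σ_{i+1 ≤ a < b ≤ j} s_{ab}` as a linear functional on
`K_{2,n}`. -/
def Xfun (n : ℕ) (i j : Fin n) : K2 n →ₗ[ℝ] ℝ where
  toFun s := ∑ a ∈ Finset.Ioc i j, ∑ b ∈ (Finset.Ioc i j).filter (fun b => a < b),
    (s : Fin n → Fin n → ℝ) a b
  map_add' s t := by simp [Finset.sum_add_distrib]
  map_smul' c s := by simp [Finset.mul_sum]

/-- Pairs `(i, j)` with `i < j` that are not cyclically adjacent mod `n`. -/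
def NonAdj (n : ℕ) : Type :=
  {p : Fin n × Fin n // p.1 < p.2 ∧
    ¬((p.2 : ℕ) = (p.1 : ℕ) + 1 ∨ ((p.1 : ℕ) = 0 ∧ (p.2 : ℕ) = n - 1))}

namespace PlanarAux

variable {n : ℕ}

/-- Telescoping sum over `Ioc`. -/
lemma tele (h : ℕ → ℝ) : ∀ (b : ℕ) {a : ℕ}, a ≤ b →
    ∑ t ∈ Finset.Ioc a b, (h t - h (t - 1)) = h b - h a := by
  intro b
  induction b with
  | zero => intro a ha; interval_cases a; simp
  | succ b ih =>
    intro a ha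
    rcases Nat.lt_or_ge a (b + 1) with h1 | h1
    · have hab : a ≤ b := by omega
      rw [Finset.sum_Ioc_succ_top hab, ih hab]
      have : b + 1 - 1 = b := by omega
      rw [this]; ring
    · have : a = b + 1 := by omega
      subst this
      simp

/-- The double sum over a planar region, ℕ-indexed. -/
def TT (f : ℕ → ℕ → ℝ) (i j : ℕ) : ℝ := ∑ a ∈ Finset.Ioc i j, ∑ b ∈ Finset.Ioc a j, f a b

lemma TT_self (f : ℕ → ℕ → ℝ) (i : ℕ) : TT f i i = 0 := by simp [TT]

lemma TT_succ_self (f : ℕ → ℕ → ℝ) (i : ℕ) : TT f i (i + 1) = 0 := by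
  unfold TT
  rw [show Finset.Ioc i (i + 1) = {i + 1} from by ext v; simp only [Finset.mem_Ioc, Finset.mem_Ioo, Finset.mem_singleton, Finset.mem_insert]; omega]
  simp

lemma TT_left (f : ℕ → ℕ → ℝ) {a j : ℕ} (h1 : 1 ≤ a) (h2 : a ≤ j) :
    TT f (a - 1) j = (∑ b ∈ Finset.Ioc a j, f a b) + TT f a j := by
  unfold TT
  rw [show Finset.Ioc (a - 1) j = insert a (Finset.Ioc a j) from by ext v; simp only [Finset.mem_Ioc, Finset.mem_Ioo, Finset.mem_singleton, Finset.mem_insert]; omega,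
    Finset.sum_insert (by simp only [Finset.mem_Ioc]; omega)]

lemma TT_right (f : ℕ → ℕ → ℝ) {i j : ℕ} (h : i < j) :
    TT f i j = TT f i (j - 1) + ∑ a ∈ Finset.Ioo i j, f a j := by
  unfold TT
  rw [show Finset.Ioc i j = insert j (Finset.Ioc i (j - 1)) from by ext v; simp only [Finset.mem_Ioc, Finset.mem_Ioo, Finset.mem_singleton, Finset.mem_insert]; omega,
    Finset.sum_insert (by simp only [Finset.mem_Ioc]; omega)]
  rw [Finset.Ioc_self, Finset.sum_empty, zero_add]
  have hstep : ∀ a ∈ Finset.Ioc i (j - 1), ∑ b ∈ Finset.Ioc a j, f a b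
      = f a j + ∑ b ∈ Finset.Ioc a (j - 1), f a b := by
    intro a ha
    simp only [Finset.mem_Ioc] at ha
    rw [show Finset.Ioc a j = insert j (Finset.Ioc a (j - 1)) from by ext v; simp only [Finset.mem_Ioc, Finset.mem_Ioo, Finset.mem_singleton, Finset.mem_insert]; omega,
      Finset.sum_insert (by simp only [Finset.mem_Ioc]; omega)]
  rw [Finset.sum_congr rfl hstep, Finset.sum_add_distrib,
    show Finset.Ioo i j = Finset.Ioc i (j - 1) from by ext v; simp only [Finset.mem_Ioc, Finset.mem_Ioo, Finset.mem_singleton, Finset.mem_insert]; omega]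
  ring

lemma TT_eq (g f : ℕ → ℕ → ℝ) {i j : ℕ} (hij : i < j)
    (hf : ∀ a b, i < a → a < b → b ≤ j →
      f a b = (g (a - 1) b - g a b) - (g (a - 1) (b - 1) - g a (b - 1)))
    (hdiag : ∀ a, g a a = 0)
    (hadj : ∀ a, i ≤ a → a < j → g a (a + 1) = 0) :
    TT f i j = g i j := by
  unfold TT
  have step1 : ∀ a ∈ Finset.Ioc i j, ∑ b ∈ Finset.Ioc a j, f a b = g (a - 1) j - g a j := by
    intro a ha
    simp only [Finset.mem_Ioc] at ha
    have hcongr : ∀ b ∈ Finset.Ioc a j, f a b =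
        (fun t => g (a - 1) t - g a t) b - (fun t => g (a - 1) t - g a t) (b - 1) := by
      intro b hb; simp only [Finset.mem_Ioc] at hb
      have := hf a b ha.1 hb.1 hb.2
      simp only []
      linarith
    rw [Finset.sum_congr rfl hcongr, tele _ j ha.2]
    have h1 : g (a - 1) a = 0 := by
      have h2 := hadj (a - 1) (by omega) (by omega)
      rwa [show a - 1 + 1 = a by omega] at h2
    rw [h1, hdiag a]; ring
  rw [Finset.sum_congr rfl step1]
  have hcongr2 : ∀ a ∈ Finset.Ioc i j, g (a - 1) j - g a j =
      (fun t => -(g t j)) a - (fun t => -(g t j)) (a - 1) := by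
    intro a _; simp only []; ring
  rw [Finset.sum_congr rfl hcongr2, tele _ j (le_of_lt hij)]
  rw [hdiag j]; ring

/-- Extension of a `Fin n` matrix to ℕ by zero. -/
def extN (s : Fin n → Fin n → ℝ) : ℕ → ℕ → ℝ := fun u v =>
  if h : u < n ∧ v < n then s ⟨u, h.1⟩ ⟨v, h.2⟩ else 0

lemma extN_apply' (s : Fin n → Fin n → ℝ) (i j : Fin n) :
    extN s (i : ℕ) (j : ℕ) = s i j := by
  unfold extN
  rw [dif_pos ⟨i.isLt, j.isLt⟩]

lemma sum_Ioc_fin (i j : Fin n) (F : Fin n → ℝ) (F' : ℕ → ℝ)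
    (hF : ∀ a : Fin n, F' (a : ℕ) = F a) :
    ∑ a ∈ Finset.Ioc i j, F a = ∑ u ∈ Finset.Ioc (i : ℕ) (j : ℕ), F' u := by
  rw [← Fin.map_valEmbedding_Ioc, Finset.sum_map]
  exact Finset.sum_congr rfl fun a _ => (hF a).symm

lemma Xfun_eq (i j : Fin n) (s : K2 n) :
    Xfun n i j s = TT (extN (s : Fin n → Fin n → ℝ)) (i : ℕ) (j : ℕ) := by
  show (∑ a ∈ Finset.Ioc i j, ∑ b ∈ (Finset.Ioc i j).filter (fun b => a < b),
    (s : Fin n → Fin n → ℝ) a b) = _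
  have h1 : ∀ a ∈ Finset.Ioc i j, ∑ b ∈ (Finset.Ioc i j).filter (fun b => a < b),
      (s : Fin n → Fin n → ℝ) a b = ∑ b ∈ Finset.Ioc a j, (s : Fin n → Fin n → ℝ) a b := by
    intro a ha
    refine Finset.sum_congr ?_ (fun _ _ => rfl)
    simp only [Finset.mem_Ioc] at ha
    ext b
    simp only [Finset.mem_filter, Finset.mem_Ioc, Fin.lt_def, Fin.le_def] at *
    omega
  rw [Finset.sum_congr rfl h1]
  unfold TT
  refine sum_Ioc_fin i j _ _ (fun a => ?_)
  exact (sum_Ioc_fin a j _ _ (fun b => extN_apply' _ a b)).symm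

/-- Cyclic predecessor on `Fin n`. -/
def cpred (a : Fin n) : Fin n :=
  ⟨if (a : ℕ) = 0 then n - 1 else (a : ℕ) - 1, by have := a.isLt; split <;> omega⟩

lemma cpred_val (a : Fin n) :
    (cpred a : ℕ) = if (a : ℕ) = 0 then n - 1 else (a : ℕ) - 1 := rfl

lemma cpred_inj : Function.Injective (cpred (n := n)) := by
  intro a b hab
  have h := congrArg Fin.val hab
  rw [cpred_val, cpred_val] at h
  have ha := a.isLt; have hb := b.isLt
  apply Fin.ext
  split at h <;> split at h <;> omega

/-- Non-cyclic-adjacency condition. -/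
def Cond (n : ℕ) (i j : Fin n) : Prop :=
  i < j ∧ ¬((j : ℕ) = (i : ℕ) + 1 ∨ ((i : ℕ) = 0 ∧ (j : ℕ) = n - 1))

instance (i j : Fin n) : Decidable (Cond n i j) := by unfold Cond; infer_instance

def mkNA {i j : Fin n} (h : Cond n i j) : NonAdj n := ⟨(i, j), h⟩

def Gmap (x : NonAdj n → ℝ) (i j : Fin n) : ℝ :=
  if h : Cond n i j then x (mkNA h)
  else if h' : Cond n j i then x (mkNA h') else 0

lemma Gmap_add (x y : NonAdj n → ℝ) (i j : Fin n) :
    Gmap (x + y) i j = Gmap x i j + Gmap y i j := by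
  unfold Gmap; split_ifs <;> simp

lemma Gmap_smul (c : ℝ) (x : NonAdj n → ℝ) (i j : Fin n) :
    Gmap (c • x) i j = c * Gmap x i j := by
  unfold Gmap; split_ifs <;> simp

lemma Gmap_symm (x : NonAdj n → ℝ) (i j : Fin n) : Gmap x i j = Gmap x j i := by
  unfold Gmap
  by_cases h1 : Cond n i j
  · have hnot : ¬ Cond n j i := fun hc => absurd hc.1 (asymm h1.1)
    rw [dif_pos h1, dif_neg hnot, dif_pos h1]
  · by_cases h2 : Cond n j i
    · rw [dif_neg h1, dif_pos h2, dif_pos h2]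
    · rw [dif_neg h1, dif_neg h2, dif_neg h2, dif_neg h1]

lemma Gmap_diag (x : NonAdj n → ℝ) (i : Fin n) : Gmap x i i = 0 := by
  unfold Gmap
  rw [dif_neg (fun hc => lt_irrefl i hc.1), dif_neg (fun hc => lt_irrefl i hc.1)]

lemma Gmap_adj (x : NonAdj n → ℝ) (a : Fin n) : Gmap x (cpred a) a = 0 := by
  have ha := a.isLt
  have hv := cpred_val a
  unfold Gmap
  rw [dif_neg, dif_neg] <;>
  · rintro ⟨h1, h2⟩
    rw [Fin.lt_def] at h1
    rcases Nat.eq_zero_or_pos (a : ℕ) with h0 | h0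
    · rw [if_pos h0] at hv
      first
        | omega
        | exact h2 (Or.inr ⟨by omega, by omega⟩)
    · rw [if_neg (by omega : ¬ (a : ℕ) = 0)] at hv
      first
        | omega
        | exact h2 (Or.inl (by omega))

def PsiRaw (x : NonAdj n → ℝ) : Fin n → Fin n → ℝ := fun a b =>
  Gmap x (cpred a) b + Gmap x a (cpred b) - Gmap x a b - Gmap x (cpred a) (cpred b)

lemma PsiRaw_mem (x : NonAdj n → ℝ) : PsiRaw x ∈ K2 n := by
  refine ⟨fun a b => ?_, fun a => ?_, fun a => ?_⟩
  · unfold PsiRaw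
    rw [Gmap_symm x (cpred a) b, Gmap_symm x a (cpred b), Gmap_symm x a b,
      Gmap_symm x (cpred a) (cpred b)]
    ring
  · unfold PsiRaw
    rw [Gmap_adj, Gmap_symm x a (cpred a), Gmap_adj, Gmap_diag, Gmap_diag]
    ring
  · have hbij : Function.Bijective (cpred (n := n)) :=
      Finite.injective_iff_bijective.mp cpred_inj
    unfold PsiRaw
    rw [Finset.sum_sub_distrib, Finset.sum_sub_distrib, Finset.sum_add_distrib]
    rw [hbij.sum_comp (fun b => Gmap x a b), hbij.sum_comp (fun b => Gmap x (cpred a) b)]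
    ring

def Phi : K2 n →ₗ[ℝ] (NonAdj n → ℝ) where
  toFun s := fun p => Xfun n p.1.1 p.1.2 s
  map_add' s t := by funext p; exact (Xfun n p.1.1 p.1.2).map_add s t
  map_smul' c s := by funext p; exact (Xfun n p.1.1 p.1.2).map_smul c s

def Psi : (NonAdj n → ℝ) →ₗ[ℝ] K2 n where
  toFun x := ⟨PsiRaw x, PsiRaw_mem x⟩
  map_add' x y := by
    apply Subtype.ext
    funext a b
    show PsiRaw (x + y) a b = PsiRaw x a b + PsiRaw y a b
    unfold PsiRaw
    rw [Gmap_add, Gmap_add, Gmap_add, Gmap_add]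
    ring
  map_smul' c x := by
    apply Subtype.ext
    funext a b
    show PsiRaw (c • x) a b = c * PsiRaw x a b
    unfold PsiRaw
    rw [Gmap_smul, Gmap_smul, Gmap_smul, Gmap_smul]
    ring

/-- ℕ-level version of `Gmap`. -/
def GmapN (x : NonAdj n → ℝ) : ℕ → ℕ → ℝ := fun u v =>
  if h : u < n ∧ v < n then Gmap x ⟨u, h.1⟩ ⟨v, h.2⟩ else 0

lemma GmapN_apply' (x : NonAdj n → ℝ) (i j : Fin n) :
    GmapN x (i : ℕ) (j : ℕ) = Gmap x i j := by
  unfold GmapN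
  rw [dif_pos ⟨i.isLt, j.isLt⟩]

lemma GmapN_diag (x : NonAdj n → ℝ) (u : ℕ) : GmapN x u u = 0 := by
  unfold GmapN
  split
  · exact Gmap_diag x _
  · rfl

lemma GmapN_adj (x : NonAdj n → ℝ) {u : ℕ} (h : u + 1 < n) : GmapN x u (u + 1) = 0 := by
  have h1 : GmapN x u (u + 1) = Gmap x ⟨u, by omega⟩ ⟨u + 1, h⟩ := dif_pos ⟨by omega, h⟩
  rw [h1, show (⟨u, by omega⟩ : Fin n) = cpred ⟨u + 1, h⟩ from
    Fin.ext (by rw [cpred_val]; simp)]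
  exact Gmap_adj x _

lemma phi_psi_raw (x : NonAdj n → ℝ) (i j : Fin n) (hp : Cond n i j) :
    Xfun n i j (Psi x) = x (mkNA hp) := by
  rw [Xfun_eq]
  show TT (extN (PsiRaw x)) (i : ℕ) (j : ℕ) = x (mkNA hp)
  have hij : (i : ℕ) < (j : ℕ) := hp.1
  have hjn := j.isLt
  have key : ∀ a b : Fin n, 0 < (a : ℕ) → 0 < (b : ℕ) →
      extN (PsiRaw x) (a : ℕ) (b : ℕ) =
        (GmapN x ((a : ℕ) - 1) (b : ℕ) - GmapN x (a : ℕ) (b : ℕ)) -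
          (GmapN x ((a : ℕ) - 1) ((b : ℕ) - 1) - GmapN x (a : ℕ) ((b : ℕ) - 1)) := by
    intro a b ha hb
    have e1 : ((a : ℕ) - 1) = (cpred a : ℕ) := by rw [cpred_val, if_neg (by omega)]
    have e2 : ((b : ℕ) - 1) = (cpred b : ℕ) := by rw [cpred_val, if_neg (by omega)]
    rw [extN_apply', e1, e2, GmapN_apply', GmapN_apply', GmapN_apply', GmapN_apply']
    unfold PsiRaw
    ring
  rw [TT_eq (GmapN x) _ hij
    (fun a b h1 h2 h3 => key ⟨a, by omega⟩ ⟨b, by omega⟩ (show 0 < a by omega) (show 0 < b by omega))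
    (GmapN_diag x)
    (fun u hu1 hu2 => GmapN_adj x (by omega))]
  rw [GmapN_apply' x i j]
  exact dif_pos hp

lemma phi_psi (x : NonAdj n → ℝ) : Phi (Psi x) = x := by
  funext p
  obtain ⟨⟨i, j⟩, hp⟩ := p
  exact phi_psi_raw x i j hp

lemma sym_nat {s : Fin n → Fin n → ℝ} (hs : s ∈ K2 n) (u v : ℕ) : extN s u v = extN s v u := by
  unfold extN
  by_cases h : u < n ∧ v < n
  · rw [dif_pos h, dif_pos ⟨h.2, h.1⟩]; exact hs.1 _ _
  · rw [dif_neg h, dif_neg (fun hc => h ⟨hc.2, hc.1⟩)]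

lemma diag_nat {s : Fin n → Fin n → ℝ} (hs : s ∈ K2 n) (u : ℕ) : extN s u u = 0 := by
  unfold extN
  split
  · exact hs.2.1 _
  · rfl

lemma row_nat {s : Fin n → Fin n → ℝ} (hs : s ∈ K2 n) (u : ℕ) (hu : u < n) :
    ∑ v ∈ Finset.range n, extN s u v = 0 := by
  have h := hs.2.2 ⟨u, hu⟩
  rw [← Fin.sum_univ_eq_sum_range (fun v => extN s u v) n]
  rw [← h]
  refine Finset.sum_congr rfl (fun b _ => ?_)
  exact extN_apply' s ⟨u, hu⟩ b

lemma TT_0_top {s : Fin n → Fin n → ℝ} (hs : s ∈ K2 n) (hn : 0 < n) :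
    TT (extN s) 0 (n - 1) = 0 := by
  set f := extN s with hf
  have hIoc : ∀ a : ℕ, Finset.Ioc a (n - 1) = Finset.Ico (a + 1) n := by
    intro a; ext v; simp only [Finset.mem_Ioc, Finset.mem_Ico]; omega
  have hrow : ∀ u < n, ∑ v ∈ Finset.range n, f u v = 0 := fun u hu => row_nat hs u hu
  have hU : ∑ a ∈ Finset.range n, ∑ b ∈ Finset.Ico (a + 1) n, f a b = 0 := by
    have hsw := Finset.sum_Ico_Ico_comm' 0 n f
    rw [Nat.Ico_zero_eq_range] at hsw
    have hQ : ∑ a ∈ Finset.range n, ∑ b ∈ Finset.range n, f a b = 0 := by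
      rw [Finset.sum_congr rfl (fun a ha => hrow a (Finset.mem_range.mp ha))]
      simp
    have hsplit : ∀ a ∈ Finset.range n, ∑ b ∈ Finset.range n, f a b
        = (∑ b ∈ Finset.range a, f a b) + (f a a + ∑ b ∈ Finset.Ico (a + 1) n, f a b) := by
      intro a ha
      rw [Finset.mem_range] at ha
      rw [Finset.range_eq_Ico, ← Finset.sum_Ico_consecutive (f a) (Nat.zero_le a) (le_of_lt ha),
        Finset.sum_eq_sum_Ico_succ_bot ha (f a), Nat.Ico_zero_eq_range]
    rw [Finset.sum_congr rfl hsplit, Finset.sum_add_distrib, Finset.sum_add_distrib] at hQ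
    have hdiag0 : ∑ a ∈ Finset.range n, f a a = 0 := by
      rw [Finset.sum_congr rfl (fun a _ => diag_nat hs a)]
      simp
    have hlow : ∑ a ∈ Finset.range n, ∑ b ∈ Finset.range a, f a b
        = ∑ a ∈ Finset.range n, ∑ b ∈ Finset.Ico (a + 1) n, f a b := by
      rw [hsw]
      refine Finset.sum_congr rfl (fun a _ => Finset.sum_congr (by ext; simp) (fun b _ => sym_nat hs a b))
    rw [hlow, hdiag0] at hQ
    linarith
  unfold TT
  rw [show Finset.Ioc 0 (n - 1) = Finset.Ico 1 n from hIoc 0]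
  rw [Finset.range_eq_Ico, Finset.sum_eq_sum_Ico_succ_bot hn] at hU
  have hrow0 : ∑ b ∈ Finset.Ico (0 + 1) n, f 0 b = 0 := by
    have h1 := hrow 0 hn
    rw [Finset.range_eq_Ico, Finset.sum_eq_sum_Ico_succ_bot hn] at h1
    have hd : f 0 0 = 0 := diag_nat hs 0
    rw [hd] at h1
    linarith
  rw [hrow0, zero_add] at hU
  rw [← hU]
  refine Finset.sum_congr rfl (fun a _ => ?_)
  rw [hIoc a]

lemma range_decomp (F : ℕ → ℝ) {b : ℕ} (hb1 : 1 ≤ b) (hbn : b < n) :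
    ∑ c ∈ Finset.range n, F c
      = F 0 + ((∑ c ∈ Finset.Ioo 0 b, F c) + (F b + ∑ c ∈ Finset.Ioc b (n - 1), F c)) := by
  have hn : 0 < n := by omega
  have e1 : Finset.Ico (0 + 1) b = Finset.Ioo 0 b := by
    ext v; simp only [Finset.mem_Ico, Finset.mem_Ioo]; omega
  have e2 : Finset.Ico (b + 1) n = Finset.Ioc b (n - 1) := by
    ext v; simp only [Finset.mem_Ico, Finset.mem_Ioc]; omega
  rw [Finset.range_eq_Ico, Finset.sum_eq_sum_Ico_succ_bot hn F,
    ← Finset.sum_Ico_consecutive F (by omega : 0 + 1 ≤ b) (le_of_lt hbn),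
    Finset.sum_eq_sum_Ico_succ_bot hbn F, e1, e2]

lemma Gmap_phi {s : Fin n → Fin n → ℝ} (hs : s ∈ K2 n) (i j : Fin n) :
    Gmap (Phi ⟨s, hs⟩) i j
      = TT (extN s) (min (i : ℕ) (j : ℕ)) (max (i : ℕ) (j : ℕ)) := by
  have hin := i.isLt
  have hjn := j.isLt
  unfold Gmap
  split_ifs with h1 h2
  · show Xfun n i j ⟨s, hs⟩ = _
    rw [Xfun_eq]
    have : (i : ℕ) < (j : ℕ) := h1.1
    rw [min_eq_left (by omega), max_eq_right (by omega)]
  · show Xfun n j i ⟨s, hs⟩ = _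
    rw [Xfun_eq]
    have : (j : ℕ) < (i : ℕ) := h2.1
    rw [min_eq_right (by omega), max_eq_left (by omega)]
  · rcases lt_trichotomy (i : ℕ) (j : ℕ) with h | h | h
    · have hD : (j : ℕ) = (i : ℕ) + 1 ∨ ((i : ℕ) = 0 ∧ (j : ℕ) = n - 1) := by
        by_contra hD
        exact h1 ⟨Fin.lt_def.mpr h, hD⟩
      rw [min_eq_left (by omega), max_eq_right (by omega)]
      rcases hD with hD | ⟨hD1, hD2⟩
      · rw [hD, (TT_succ_self _ _).symm]
      · rw [hD1, hD2, (TT_0_top hs (by omega)).symm]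
    · rw [h, min_self, max_self, (TT_self _ _).symm]
    · have hD : (i : ℕ) = (j : ℕ) + 1 ∨ ((j : ℕ) = 0 ∧ (i : ℕ) = n - 1) := by
        by_contra hD
        exact h2 ⟨Fin.lt_def.mpr h, hD⟩
      rw [min_eq_right (by omega), max_eq_left (by omega)]
      rcases hD with hD | ⟨hD1, hD2⟩
      · rw [hD, (TT_succ_self _ _).symm]
      · rw [hD1, hD2, (TT_0_top hs (by omega)).symm]

lemma psi_phi (z : K2 n) : Psi (Phi z) = z := by
  obtain ⟨s, hs⟩ := z
  apply Subtype.ext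
  show PsiRaw (Phi ⟨s, hs⟩) = s
  have key : ∀ a b : Fin n, (a : ℕ) < (b : ℕ) → PsiRaw (Phi ⟨s, hs⟩) a b = s a b := by
    intro a b hab
    have hbn := b.isLt
    have han := a.isLt
    unfold PsiRaw
    rw [Gmap_phi hs, Gmap_phi hs, Gmap_phi hs, Gmap_phi hs]
    have hcb : (cpred b : ℕ) = (b : ℕ) - 1 := by rw [cpred_val, if_neg (by omega)]
    have hsab : extN s (a : ℕ) (b : ℕ) = s a b := extN_apply' s a b
    by_cases h0 : (a : ℕ) = 0
    · have hca : (cpred a : ℕ) = n - 1 := by rw [cpred_val, if_pos h0]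
      rw [hca, hcb, h0]
      rw [min_eq_right (by omega), max_eq_left (by omega),
        min_eq_left (by omega), max_eq_right (by omega),
        min_eq_left (by omega), max_eq_right (by omega),
        min_eq_right (by omega), max_eq_left (by omega)]
      -- TT f b (n-1) + TT f 0 (b-1) - TT f 0 b - TT f (b-1) (n-1) = s a b
      rw [TT_left (extN s) (by omega : 1 ≤ (b : ℕ)) (by omega : (b : ℕ) ≤ n - 1)]
      rw [TT_right (extN s) (by omega : 0 < (b : ℕ))]
      have hdec := range_decomp (fun c => extN s (b : ℕ) c) (by omega : 1 ≤ (b : ℕ)) hbn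
      rw [row_nat hs (b : ℕ) hbn] at hdec
      have hsymIoo : ∑ c ∈ Finset.Ioo 0 (b : ℕ), extN s c (b : ℕ)
          = ∑ c ∈ Finset.Ioo 0 (b : ℕ), extN s (b : ℕ) c :=
        Finset.sum_congr rfl (fun c _ => sym_nat hs c (b : ℕ))
      rw [hsymIoo]
      have hdg : extN s (b : ℕ) (b : ℕ) = 0 := diag_nat hs (b : ℕ)
      have hsym0 : extN s (b : ℕ) 0 = extN s 0 (b : ℕ) := sym_nat hs (b : ℕ) 0
      rw [← hsab, ← h0]
      simp only [h0]
      linarith [hdec]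
    · have hca : (cpred a : ℕ) = (a : ℕ) - 1 := by rw [cpred_val, if_neg h0]
      rw [hca, hcb]
      rw [min_eq_left (by omega), max_eq_right (by omega),
        min_eq_left (by omega), max_eq_right (by omega),
        min_eq_left (by omega), max_eq_right (by omega),
        min_eq_left (by omega), max_eq_right (by omega)]
      -- TT f (a-1) b + TT f a (b-1) - TT f a b - TT f (a-1) (b-1) = s a b
      rw [TT_left (extN s) (by omega : 1 ≤ (a : ℕ)) (by omega : (a : ℕ) ≤ (b : ℕ))]
      rw [TT_left (extN s) (by omega : 1 ≤ (a : ℕ)) (by omega : (a : ℕ) ≤ (b : ℕ) - 1)]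
      rw [show Finset.Ioc (a : ℕ) (b : ℕ) = insert (b : ℕ) (Finset.Ioc (a : ℕ) ((b : ℕ) - 1))
          from by ext v; simp only [Finset.mem_Ioc, Finset.mem_insert]; omega,
        Finset.sum_insert (by simp only [Finset.mem_Ioc]; omega)]
      rw [← hsab]
      ring
  funext a b
  rcases lt_trichotomy (a : ℕ) (b : ℕ) with h | h | h
  · exact key a b h
  · have : a = b := Fin.ext h
    subst this
    rw [(PsiRaw_mem (Phi ⟨s, hs⟩)).2.1 a, hs.2.1 a]
  · rw [(PsiRaw_mem (Phi ⟨s, hs⟩)).1 a b, key b a h, hs.1 b a]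

noncomputable def equivK2 : K2 n ≃ₗ[ℝ] (NonAdj n → ℝ) :=
  LinearEquiv.ofLinear Phi Psi (LinearMap.ext phi_psi) (LinearMap.ext psi_phi)

instance instFintypeNonAdj : Fintype (NonAdj n) := by unfold NonAdj; exact Subtype.fintype _

lemma card_nonAdj : Nat.card (NonAdj n) = n * (n - 3) / 2 := by
  have e0 : NonAdj n ≃ {p : Fin n × Fin n // Cond n p.1 p.2} := Equiv.refl _
  rw [Nat.card_congr e0, Nat.card_eq_fintype_card, Fintype.card_subtype]
  rw [show (Finset.univ : Finset (Fin n × Fin n)) = Finset.univ ×ˢ Finset.univ from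
    Finset.univ_product_univ.symm]
  rw [Finset.card_filter, Finset.sum_product]
  have h2 : ∀ i : Fin n, (∑ j : Fin n, if Cond n i j then (1 : ℕ) else 0)
      = ((Finset.range n).filter
          (fun v => (i : ℕ) < v ∧ ¬(v = (i : ℕ) + 1 ∨ ((i : ℕ) = 0 ∧ v = n - 1)))).card := by
    intro i
    rw [Finset.card_filter]
    rw [← Fin.sum_univ_eq_sum_range
      (fun v => if (i : ℕ) < v ∧ ¬(v = (i : ℕ) + 1 ∨ ((i : ℕ) = 0 ∧ v = n - 1)) then (1 : ℕ)
        else 0) n]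
    refine Finset.sum_congr rfl (fun j _ => ?_)
    refine if_congr ?_ rfl rfl
    unfold Cond
    rw [Fin.lt_def]
  rw [Finset.sum_congr rfl (fun i _ => h2 i)]
  have h3 : ∀ i : Fin n, ((Finset.range n).filter
      (fun v => (i : ℕ) < v ∧ ¬(v = (i : ℕ) + 1 ∨ ((i : ℕ) = 0 ∧ v = n - 1)))).card
      = if (i : ℕ) = 0 then n - 3 else n - ((i : ℕ) + 2) := by
    intro i
    have hin := i.isLt
    by_cases h0 : (i : ℕ) = 0
    · rw [if_pos h0, show (Finset.range n).filter _ = Finset.Ico 2 (n - 1) from by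
        ext v; simp only [Finset.mem_filter, Finset.mem_range, Finset.mem_Ico, h0, true_and]; omega,
        Nat.card_Ico]
      omega
    · rw [if_neg h0, show (Finset.range n).filter _ = Finset.Ico ((i : ℕ) + 2) n from by
        ext v; simp only [Finset.mem_filter, Finset.mem_range, Finset.mem_Ico]; omega,
        Nat.card_Ico]
  rw [Finset.sum_congr rfl (fun i _ => h3 i)]
  rw [Fin.sum_univ_eq_sum_range (fun k => if k = 0 then n - 3 else n - (k + 2)) n]
  rcases Nat.lt_or_ge n 3 with hn | hn
  · interval_cases n <;> simp [Finset.sum_range_succ]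
  · obtain ⟨m, rfl⟩ : ∃ m, n = m + 3 := ⟨n - 3, by omega⟩
    rw [show m + 3 = (m + 2) + 1 from rfl, Finset.sum_range_succ']
    rw [Finset.sum_congr rfl (fun i _ => show (if i + 1 = 0 then (m + 2) + 1 - 3
        else (m + 2) + 1 - (i + 1 + 2)) = m - i from by rw [if_neg (by omega)]; omega)]
    rw [if_pos rfl]
    rw [show m + 2 = (m + 1) + 1 from rfl, Finset.sum_range_succ,
      show m - ((m + 1)) = 0 from by omega, add_zero]
    have hrefl := Finset.sum_range_reflect (fun i => i) (m + 1)
    rw [Finset.sum_congr rfl (fun i hi => show m - i = m + 1 - 1 - i from by omega), hrefl]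
    have hg := Finset.sum_range_id_mul_two (m + 1)
    have h4 : ((m + 1) + 1 + 1) * ((m + 1) + 1 + 1 - 3)
        = (∑ i ∈ Finset.range (m + 1), i) * 2 + 2 * m := by
    -- (m+3) * m = (m+1)*m + 2*m
      rw [show (m + 1) + 1 + 1 - 3 = m from by omega, hg, Nat.add_sub_cancel]
      ring
    omega

end PlanarAux

/-- The planar variables `X'_{i,j}` indexed by non-cyclically-adjacent pairs form a basis of the
dual space of `K_{2,n}`; in particular there are `n(n-3)/2` of them and
`dim K_{2,n} = n(n-3)/2`. -/
theorem planar_basis_of_dual (n : ℕ) :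
    LinearIndependent ℝ (fun p : NonAdj n => Xfun n p.1.1 p.1.2) ∧
    Submodule.span ℝ (Set.range (fun p : NonAdj n => Xfun n p.1.1 p.1.2)) = ⊤ ∧
    Nat.card (NonAdj n) = n * (n - 3) / 2 ∧
    Module.finrank ℝ (K2 n) = n * (n - 3) / 2 := by
  classical
  set e := PlanarAux.equivK2 (n := n) with he
  let B : Module.Basis (NonAdj n) ℝ (Module.Dual ℝ (K2 n)) :=
    ((Pi.basisFun ℝ (NonAdj n)).dualBasis).map e.dualMap
  have hB : ∀ p : NonAdj n, B p = Xfun n p.1.1 p.1.2 := by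
    intro p
    apply LinearMap.ext
    intro z
    show ((Pi.basisFun ℝ (NonAdj n)).dualBasis.map e.dualMap) p z = _
    rw [Module.Basis.map_apply, LinearEquiv.dualMap_apply, Module.Basis.dualBasis_apply, Pi.basisFun_repr]
    show PlanarAux.Phi z p = _
    rfl
  have hfun : (fun p : NonAdj n => Xfun n p.1.1 p.1.2) = ⇑B :=
    funext fun p => (hB p).symm
  have hcard := PlanarAux.card_nonAdj (n := n)
  refine ⟨?_, ?_, hcard, ?_⟩
  · rw [hfun]; exact B.linearIndependent
  · rw [hfun]; exact B.span_eq
  · rw [e.finrank_eq, Module.finrank_pi ℝ, ← Nat.card_eq_fintype_card, hcard]
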